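/- There exists γ₀ ∈ (0,1) such that for every γ ∈ (0, γ₀) the following uniform Poisson local-limit asymptotics hold: for every ε > 0 there is K < ∞ such that for all real k ≥ K, all real u > 0 with |u − √2·k| ≤ k^{3/5} and ũ := u²/k^γ ∈ ℕ, and all real x ≥ 0 with |x − u| ≤ k^{3γ/2}, writing x̃ := x²/k^γ, one has | e^{−x̃} · x̃^{ũ} / ũ! − g(x) | ≤ ε · g(x), where g(x) := ( √(k^γ) / (√(2π) · u) ) · e^{−2(x−u)²/k^γ}. -/

import Mathlib

open Real

-- Taylor bound for log
lemma aux_log {t : ℝ} (ht : |t| ≤ 1/2) : |Real.log (1+t) - t + t^2/2| ≤ 2 * |t|^3 := by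
  have h1 : |(-t)| < 1 := by rw [abs_neg]; cases abs_nonneg t |>.lt_or_eq <;> linarith
  have h := Real.abs_log_sub_add_sum_range_le h1 2
  simp only [Finset.sum_range_succ, Finset.sum_range_zero, abs_neg] at h
  have he : (1 : ℝ) - -t = 1 + t := by ring
  rw [he] at h
  have h3 : |Real.log (1+t) - t + t^2/2| =
      |0 + (-t) ^ (0 + 1) / ((0:ℕ) + 1) + (-t) ^ (1 + 1) / ((1:ℕ) + 1) + Real.log (1 + t)| := by
    congr 1; push_cast; ring
  rw [h3]
  refine h.trans ?_
  have : 1/2 ≤ 1 - |t| := by linarith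
  rw [div_le_iff₀ (by linarith)]
  have h4 : |t| ^ (2+1) = |t|^3 := by norm_num
  rw [h4]
  nlinarith [mul_nonneg (pow_nonneg (abs_nonneg t) 3) (by linarith : (0:ℝ) ≤ 1 - 2*|t|)]

-- Stirling ratio
lemma aux_stirling {δ : ℝ} (hδ : 0 < δ) :
    ∃ N : ℕ, ∀ n : ℕ, N ≤ n → |Real.sqrt Real.pi / Stirling.stirlingSeq n - 1| ≤ δ := by
  have hπ : Real.sqrt Real.pi ≠ 0 := by positivity
  have h := Filter.Tendsto.div (tendsto_const_nhds (x := Real.sqrt Real.pi))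
    Stirling.tendsto_stirlingSeq_sqrt_pi hπ
  rw [div_self hπ] at h
  obtain ⟨N, hN⟩ := Metric.tendsto_atTop.mp h δ hδ
  exact ⟨N, fun n hn => by simpa [Real.dist_eq] using (hN n hn).le⟩

-- nth root bound
lemma aux_root {a k : ℝ} (ha : 0 ≤ a) (hk : 0 ≤ k) (p q : ℕ) (hq : 0 < q)
    (h : a ^ q ≤ k ^ p) : a ≤ k ^ ((p:ℝ)/(q:ℝ)) := by
  have h1 : a = (a ^ q) ^ ((q:ℝ)⁻¹) := by
    rw [← Real.rpow_natCast a q, ← Real.rpow_mul ha]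
    rw [mul_inv_cancel₀ (by exact_mod_cast hq.ne'), Real.rpow_one]
  rw [h1]
  have h2 : ((k ^ p : ℝ)) ^ ((q:ℝ)⁻¹) = k ^ ((p:ℝ)/(q:ℝ)) := by
    rw [← Real.rpow_natCast k p, ← Real.rpow_mul hk]
    congr 1
  rw [← h2]
  exact Real.rpow_le_rpow (by positivity) h (by positivity)

-- factorial via stirlingSeq
lemma aux_fact {n : ℕ} (hn : 1 ≤ n) :
    (Nat.factorial n : ℝ) = Stirling.stirlingSeq n * (Real.sqrt (2*n) * ((n:ℝ)/Real.exp 1)^n) := by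
  have hd : Real.sqrt (2*n) * ((n:ℝ)/Real.exp 1)^n ≠ 0 := by
    have : (0:ℝ) < n := by exact_mod_cast hn
    positivity
  rw [Stirling.stirlingSeq, div_mul_cancel₀ _ hd]

lemma aux_stirling_pos {n : ℕ} (hn : 1 ≤ n) : 0 < Stirling.stirlingSeq n := by
  rw [Stirling.stirlingSeq]
  have : (0:ℝ) < n := by exact_mod_cast hn
  positivity

lemma aux_final {δ ε : ℝ} (h1 : 0 < δ) (h2 : δ ≤ 1/8) (h3 : 8*δ ≤ ε) :
    (1+δ)*(2*δ)+δ ≤ ε := by nlinarith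

set_option maxHeartbeats 1000000 in
theorem statement13 :
    ∃ γ₀ ∈ Set.Ioo (0 : ℝ) 1, ∀ γ ∈ Set.Ioo (0 : ℝ) γ₀, ∀ ε : ℝ, 0 < ε →
      ∃ K : ℝ, ∀ k : ℝ, K ≤ k → ∀ u : ℝ, 0 < u →
        |u - Real.sqrt 2 * k| ≤ k ^ ((3 : ℝ) / 5) →
        ∀ ut : ℕ, (ut : ℝ) = u ^ 2 / k ^ γ →
        ∀ x : ℝ, 0 ≤ x → |x - u| ≤ k ^ (3 * γ / 2) →
        |Real.exp (-(x ^ 2 / k ^ γ)) * (x ^ 2 / k ^ γ) ^ ut / (Nat.factorial ut : ℝ)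
            - Real.sqrt (k ^ γ) / (Real.sqrt (2 * Real.pi) * u)
              * Real.exp (-2 * (x - u) ^ 2 / k ^ γ)|
          ≤ ε * (Real.sqrt (k ^ γ) / (Real.sqrt (2 * Real.pi) * u)
              * Real.exp (-2 * (x - u) ^ 2 / k ^ γ)) := by
  refine ⟨1/4, by norm_num, ?_⟩
  rintro γ ⟨hγ0, hγ4⟩ ε hε
  set δ := min ε 1 / 8 with hδdef
  have hδpos : 0 < δ := by rw [hδdef]; positivity
  have hδ1 : δ ≤ 1/8 := by
    rw [hδdef]; have := min_le_right ε 1; linarith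
  have hδε : 8 * δ ≤ ε := by
    rw [hδdef]; have := min_le_left ε 1; linarith
  obtain ⟨N, hN⟩ := aux_stirling hδpos
  refine ⟨max (max 100 (N:ℝ)) ((57/δ)^(8:ℕ)), ?_⟩
  intro k hk u hu hu2 ut hut x hx hxu
  -- basic size facts
  have hk100 : (100:ℝ) ≤ k := le_trans (le_trans (le_max_left _ _) (le_max_left _ _)) hk
  have hkN : (N:ℝ) ≤ k := le_trans (le_trans (le_max_right _ _) (le_max_left _ _)) hk
  have hk57 : ((57/δ)^(8:ℕ) : ℝ) ≤ k := le_trans (le_max_right _ _) hk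
  have hk0 : (0:ℝ) < k := by linarith
  have hk1 : (1:ℝ) ≤ k := by linarith
  have hkγ : (0:ℝ) < k ^ γ := Real.rpow_pos_of_pos hk0 γ
  have hkγ1 : k ^ γ ≤ k := by
    calc k ^ γ ≤ k ^ (1:ℝ) := Real.rpow_le_rpow_of_exponent_le hk1 (by linarith)
    _ = k := Real.rpow_one k
  set c := k ^ (3*γ/2) with hcdef
  have hc0 : 0 < c := Real.rpow_pos_of_pos hk0 _
  have hc38 : c ≤ k ^ ((3:ℝ)/8) := Real.rpow_le_rpow_of_exponent_le hk1 (by linarith)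
  have h58 : (6:ℝ) ≤ k ^ ((5:ℝ)/8) := by
    refine aux_root (by norm_num) hk0.le 5 8 (by norm_num) ?_
    calc (6:ℝ)^8 ≤ 100^5 := by norm_num
    _ ≤ k^5 := pow_le_pow_left₀ (by norm_num) hk100 5
  have hmul38 : k ^ ((3:ℝ)/8) * k ^ ((5:ℝ)/8) = k := by
    rw [← Real.rpow_add hk0]; norm_num
  have hck : 6 * c ≤ k := by
    calc 6 * c ≤ k ^ ((5:ℝ)/8) * k ^ ((3:ℝ)/8) :=
      mul_le_mul h58 hc38 hc0.le (by positivity)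
    _ = k := by rw [mul_comm]; exact hmul38
  -- u ≥ k
  have hs2 : Real.sqrt 2 ^ 2 = 2 := Real.sq_sqrt (by norm_num)
  have hs2' : (4:ℝ)/3 ≤ Real.sqrt 2 := by nlinarith [Real.sqrt_nonneg 2]
  have h25 : (3:ℝ) ≤ k ^ ((2:ℝ)/5) := by
    refine aux_root (by norm_num) hk0.le 2 5 (by norm_num) ?_
    calc (3:ℝ)^5 ≤ 100^2 := by norm_num
    _ ≤ k^2 := pow_le_pow_left₀ (by norm_num) hk100 2
  have hmul35 : k ^ ((2:ℝ)/5) * k ^ ((3:ℝ)/5) = k := by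
    rw [← Real.rpow_add hk0]; norm_num
  have h35 : 3 * k ^ ((3:ℝ)/5) ≤ k := by
    calc 3 * k ^ ((3:ℝ)/5) ≤ k ^ ((2:ℝ)/5) * k ^ ((3:ℝ)/5) :=
      mul_le_mul_of_nonneg_right h25 (by positivity)
    _ = k := hmul35
  have huk : k ≤ u := by
    have h1 := (abs_le.mp hu2).1
    have h2 : (4:ℝ)/3 * k ≤ Real.sqrt 2 * k := mul_le_mul_of_nonneg_right hs2' hk0.le
    linarith
  -- x bounds
  have hxu' := abs_le.mp hxu
  have hxpos : 0 < x := by linarith [hxu'.1]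
  have hx2u : x ≤ 2*u := by linarith [hxu'.2]
  -- n = ut facts
  have hn_k : k ≤ (ut:ℝ) := by
    rw [hut, le_div_iff₀ hkγ]
    have e1 : k * k ^ γ ≤ k * k := mul_le_mul_of_nonneg_left hkγ1 hk0.le
    have e2 : k * k ≤ u * u := mul_le_mul huk huk hk0.le (by linarith)
    calc k * k ^ γ ≤ k * k := e1
    _ ≤ u * u := e2
    _ = u ^ 2 := by ring
  have hut1 : 1 ≤ ut := by exact_mod_cast (by linarith : (1:ℝ) ≤ (ut:ℝ))
  have hutN : N ≤ ut := by exact_mod_cast le_trans hkN hn_k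
  have hn0 : (0:ℝ) < (ut:ℝ) := by linarith
  have hxtpos : (0:ℝ) < x^2/k^γ := by positivity
  set s := Stirling.stirlingSeq ut with hsdef
  have hs_pos : 0 < s := aux_stirling_pos hut1
  have hm : |Real.sqrt Real.pi / s - 1| ≤ δ := hN ut hutN
  set φ := (ut:ℝ) - x^2/k^γ + (ut:ℝ)*(Real.log (x^2/k^γ) - Real.log (ut:ℝ))
      + 2*(x-u)^2/k^γ with hφdef
  -- ==== bound |φ| ≤ δ ====
  have hφ_le : |φ| ≤ δ := by
    set t := (x^2/k^γ)/(ut:ℝ) - 1 with htdef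
    have hnt : (ut:ℝ) * t = x^2/k^γ - (ut:ℝ) := by
      rw [htdef]; field_simp
    have h1t : 1 + t = (x^2/k^γ)/(ut:ℝ) := by rw [htdef]; ring
    have ht_eq : t = (x^2 - u^2)/u^2 := by
      rw [htdef, hut]; field_simp
    have hxu3 : x + u ≤ 3*u := by linarith
    have habs_num : |x^2 - u^2| ≤ c * (3*u) := by
      have he : x^2 - u^2 = (x-u)*(x+u) := by ring
      rw [he, abs_mul]
      refine mul_le_mul hxu ?_ (abs_nonneg _) hc0.le
      rw [abs_of_nonneg (by linarith : (0:ℝ) ≤ x + u)]; exact hxu3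
    have hu2pos : (0:ℝ) < u^2 := pow_pos hu 2
    have ht_abs : |t| ≤ 3*c/u := by
      rw [ht_eq, abs_div, abs_of_pos hu2pos, div_le_div_iff₀ hu2pos hu]
      calc |x^2-u^2| * u ≤ (c*(3*u))*u := mul_le_mul_of_nonneg_right habs_num hu.le
      _ = 3*c*u^2 := by ring
    have ht_half : |t| ≤ 1/2 := by
      refine ht_abs.trans ?_
      rw [div_le_iff₀ hu]; linarith
    have hA := aux_log ht_half
    have hlog : Real.log (x^2/k^γ) - Real.log (ut:ℝ) = Real.log (1+t) := by
      rw [← Real.log_div hxtpos.ne' hn0.ne', ← h1t]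
    have hφeq : φ = (ut:ℝ)*(Real.log (1+t) - t + t^2/2)
        + (2*(x-u)^2/k^γ - (ut:ℝ)*t^2/2) := by
      rw [hφdef, hlog]; linear_combination hnt
    have hQpos : (0:ℝ) < c^3/(k^γ*u) := by positivity
    have hAbound : |(ut:ℝ)*(Real.log (1+t) - t + t^2/2)| ≤ 54 * (c^3/(k^γ * u)) := by
      rw [abs_mul, abs_of_pos hn0]
      calc (ut:ℝ) * |Real.log (1+t) - t + t^2/2| ≤ (ut:ℝ) * (2*|t|^3) :=
        mul_le_mul_of_nonneg_left hA hn0.le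
      _ ≤ (u^2/k^γ) * (2*(3*c/u)^3) := by
          rw [hut]
          refine mul_le_mul_of_nonneg_left ?_ (by positivity)
          have h3 : |t|^3 ≤ (3*c/u)^3 :=
            pow_le_pow_left₀ (abs_nonneg _) ht_abs 3
          linarith
      _ = 54 * (c^3/(k^γ * u)) := by field_simp; ring
    have hB_eq : 2*(x-u)^2/k^γ - (ut:ℝ)*t^2/2
        = (x-u)^2*((u-x)*(x+3*u))/(2*u^2*k^γ) := by
      rw [ht_eq, hut]; field_simp; ring
    have hBbound : |2*(x-u)^2/k^γ - (ut:ℝ)*t^2/2| ≤ 3 * (c^3/(k^γ * u)) := by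
      rw [hB_eq]
      have hden : (0:ℝ) < 2*u^2*k^γ := by positivity
      rw [abs_div, abs_of_pos hden]
      have hux : |u - x| ≤ c := by rw [abs_sub_comm]; exact hxu
      have h5 : |x+3*u| ≤ 5*u := by
        rw [abs_of_nonneg (by linarith : (0:ℝ) ≤ x + 3*u)]; linarith
      have hsq : |(x-u)^2| ≤ c^2 := by
        rw [abs_of_nonneg (sq_nonneg _), ← sq_abs]
        exact pow_le_pow_left₀ (abs_nonneg _) hxu 2
      have hnum : |(x-u)^2*((u-x)*(x+3*u))| ≤ c^2*(c*(5*u)) := by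
        rw [abs_mul, abs_mul]
        refine mul_le_mul hsq ?_ (mul_nonneg (abs_nonneg _) (abs_nonneg _)) (by positivity)
        exact mul_le_mul hux h5 (abs_nonneg _) hc0.le
      calc |(x-u)^2*((u-x)*(x+3*u))| / (2*u^2*k^γ)
          ≤ (c^2*(c*(5*u))) / (2*u^2*k^γ) := by
            exact (div_le_div_iff_of_pos_right hden).mpr hnum
      _ = (5/2) * (c^3/(k^γ*u)) := by field_simp
      _ ≤ 3 * (c^3/(k^γ*u)) := by
            refine mul_le_mul_of_nonneg_right (by norm_num) (by positivity)
    have hφ57 : |φ| ≤ 57 * (c^3/(k^γ*u)) := by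
      rw [hφeq]
      refine (abs_add_le _ _).trans ?_
      linarith
    refine hφ57.trans ?_
    have hc3eq : c^3 = k^(3*γ/2*((3:ℕ):ℝ)) := by
      rw [hcdef, ← Real.rpow_natCast (k^(3*γ/2)) 3, ← Real.rpow_mul hk0.le]
    have hc3div : c^3/k^γ = k^(3*γ/2*((3:ℕ):ℝ) - γ) := by
      rw [hc3eq, Real.rpow_sub hk0]
    have hc78 : c^3/k^γ ≤ k^((7:ℝ)/8) := by
      rw [hc3div]
      refine Real.rpow_le_rpow_of_exponent_le hk1 ?_
      push_cast; linarith
    have hfrac : c^3/(k^γ*u) ≤ k^((7:ℝ)/8)/k := by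
      rw [show c^3/(k^γ*u) = (c^3/k^γ)/u by field_simp]
      exact div_le_div₀ (by positivity) hc78 hk0 huk
    have hk78 : k^((7:ℝ)/8)/k = k^(-((1:ℝ)/8)) := by
      rw [show k^((7:ℝ)/8)/k = k^((7:ℝ)/8)/k^(1:ℝ) by rw [Real.rpow_one],
        ← Real.rpow_sub hk0]
      norm_num
    have h18 : 57/δ ≤ k^((1:ℝ)/8) := by
      have := aux_root (a := 57/δ) (by positivity) hk0.le 1 8 (by norm_num)
        (by rw [pow_one]; exact hk57)
      norm_num at this
      exact this
    have hinv : k^(-((1:ℝ)/8)) ≤ δ/57 := by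
      rw [Real.rpow_neg hk0.le]
      calc (k^((1:ℝ)/8))⁻¹ ≤ (57/δ)⁻¹ := by
            refine inv_anti₀ (by positivity) h18
      _ = δ/57 := by rw [inv_div]
    calc 57 * (c^3/(k^γ*u)) ≤ 57 * (δ/57) := by
          refine mul_le_mul_of_nonneg_left ?_ (by norm_num)
          exact hfrac.trans (by rw [hk78]; exact hinv)
    _ = δ := by ring
  -- ==== key identity ====
  have hfact := aux_fact hut1
  have hxpow : Real.exp ((ut:ℝ) * Real.log (x^2/k^γ)) = (x^2/k^γ)^ut := by
    rw [Real.exp_nat_mul, Real.exp_log hxtpos]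
  have hnpow : Real.exp ((ut:ℝ) * (Real.log (ut:ℝ) - 1)) = ((ut:ℝ)/Real.exp 1)^ut := by
    rw [Real.exp_nat_mul]; congr 1
    rw [Real.exp_sub, Real.exp_log hn0]
  have hsqkγ : Real.sqrt (k^γ) ≠ 0 := by positivity
  have h2n : 2*(ut:ℝ) = (Real.sqrt 2 * u / Real.sqrt (k^γ))^2 := by
    rw [hut, div_pow, mul_pow, hs2, Real.sq_sqrt hkγ.le]; ring
  have hs2n : Real.sqrt (2*(ut:ℝ)) = Real.sqrt 2 * u / Real.sqrt (k^γ) := by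
    rw [h2n, Real.sqrt_sq (by positivity)]
  have hsqrt : Real.sqrt (2*Real.pi) * u
      = Real.sqrt Real.pi * Real.sqrt (2*(ut:ℝ)) * Real.sqrt (k^γ) := by
    rw [hs2n, Real.sqrt_mul (by norm_num : (0:ℝ) ≤ 2)]
    field_simp
  have hexp : Real.exp φ * Real.exp (-2*(x-u)^2/k^γ)
        * Real.exp ((ut:ℝ)*(Real.log (ut:ℝ) - 1))
      = Real.exp (-(x^2/k^γ)) * Real.exp ((ut:ℝ) * Real.log (x^2/k^γ)) := by
    rw [← Real.exp_add, ← Real.exp_add, ← Real.exp_add]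
    congr 1; rw [hφdef]; ring
  have hsqπ : Real.sqrt Real.pi ≠ 0 := by positivity
  have hsq2n : Real.sqrt (2*(ut:ℝ)) ≠ 0 := by positivity
  have key : Real.exp (-(x ^ 2 / k ^ γ)) * (x ^ 2 / k ^ γ) ^ ut / (Nat.factorial ut : ℝ)
      = (Real.sqrt Real.pi / s * Real.exp φ)
        * (Real.sqrt (k ^ γ) / (Real.sqrt (2 * Real.pi) * u)
            * Real.exp (-2 * (x - u) ^ 2 / k ^ γ)) := by
    rw [hfact, ← hsdef, ← hxpow, ← hnpow, hsqrt, ← hexp]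
    have hs0 : s ≠ 0 := hs_pos.ne'
    have hE : Real.exp ((ut:ℝ)*(Real.log (ut:ℝ) - 1)) ≠ 0 := Real.exp_ne_zero _
    field_simp
  -- ==== conclusion ====
  have hGpos : 0 < Real.sqrt (k ^ γ) / (Real.sqrt (2 * Real.pi) * u)
      * Real.exp (-2 * (x - u) ^ 2 / k ^ γ) := by
    have : (0:ℝ) < Real.sqrt (2*Real.pi) := Real.sqrt_pos.mpr (by positivity)
    positivity
  have hdiff : Real.exp (-(x ^ 2 / k ^ γ)) * (x ^ 2 / k ^ γ) ^ ut / (Nat.factorial ut : ℝ)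
      - Real.sqrt (k ^ γ) / (Real.sqrt (2 * Real.pi) * u)
          * Real.exp (-2 * (x - u) ^ 2 / k ^ γ)
      = (Real.sqrt Real.pi / s * Real.exp φ - 1)
        * (Real.sqrt (k ^ γ) / (Real.sqrt (2 * Real.pi) * u)
            * Real.exp (-2 * (x - u) ^ 2 / k ^ γ)) := by
    rw [key]; ring
  rw [hdiff, abs_mul, abs_of_pos hGpos]
  refine mul_le_mul_of_nonneg_right ?_ hGpos.le
  have hsplit : Real.sqrt Real.pi / s * Real.exp φ - 1
      = Real.sqrt Real.pi / s * (Real.exp φ - 1) + (Real.sqrt Real.pi / s - 1) := by ring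
  have h2 : |Real.exp φ - 1| ≤ 2*|φ| :=
    Real.abs_exp_sub_one_le (le_trans hφ_le (by linarith))
  have h3 : |Real.sqrt Real.pi / s| ≤ 1 + δ := by
    have := abs_le.mp hm
    rw [abs_le]; constructor <;> [linarith [this.1]; linarith [this.2]]
  calc |Real.sqrt Real.pi / s * Real.exp φ - 1|
      ≤ |Real.sqrt Real.pi / s| * |Real.exp φ - 1| + |Real.sqrt Real.pi / s - 1| := by
        rw [hsplit]; refine (abs_add_le _ _).trans ?_; rw [abs_mul]
    _ ≤ (1+δ) * (2*δ) + δ := by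
        refine add_le_add ?_ hm
        refine mul_le_mul h3 (h2.trans (by linarith [hφ_le])) (abs_nonneg _) (by linarith)
    _ ≤ ε := aux_final hδpos hδ1 hδε
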